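/- For every odd integer n ≥ 3, the set of real solutions t of the equation t − ⌊t^n⌋ = 1/n is exactly {1/n, −(n−1)/n}. -/

import Mathlib

/-- For every odd integer `n ≥ 3`, the real solutions `t` of `t - ⌊t^n⌋ = 1/n`
are exactly `1/n` and `-(n-1)/n`.  (Writing `x = t^n`, this is the equation
`x^(1/n) - ⌊x⌋ = 1/n` with the real `n`-th root.) -/
theorem odd_root_floor_equation_solutions (n : ℕ) (hn : 3 ≤ n) (ho : Odd n) :
    {t : ℝ | t - (⌊t ^ n⌋ : ℝ) = 1 / n} =
      {1 / (n : ℝ), -(((n : ℝ) - 1) / n)} := by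
  have hn3 : (3:ℝ) ≤ (n:ℝ) := by exact_mod_cast hn
  have hnpos : (0:ℝ) < n := by linarith
  have hinv : (0:ℝ) < 1/n := by positivity
  have hinv3 : 1/(n:ℝ) ≤ 1/3 := by
    rw [div_le_div_iff₀ hnpos (by norm_num)]; linarith
  ext t
  simp only [Set.mem_setOf_eq, Set.mem_insert_iff, Set.mem_singleton_iff]
  constructor
  · intro h
    have hk1 : ((⌊t^n⌋ : ℝ)) ≤ t^n := Int.floor_le _
    have hk2 : t^n < (⌊t^n⌋ : ℝ) + 1 := Int.lt_floor_add_one _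
    set k := ⌊t^n⌋ with hk
    have ht : t = (k:ℝ) + 1/n := by linarith
    rcases lt_trichotomy k 0 with hlt | heq | hgt
    · rcases eq_or_lt_of_le (by omega : k ≤ -1) with h1 | h2
      · right
        rw [ht, h1]
        push_cast
        field_simp
        ring
      · exfalso
        have hk2' : (k:ℝ) ≤ -2 := by exact_mod_cast (by omega : k ≤ -2)
        have h1t : (1:ℝ) ≤ -t := by rw [ht]; linarith
        have hpow : (-t)^2 ≤ (-t)^n := pow_le_pow_right₀ h1t (by omega)
        have hneg : (-t)^n = -(t^n) := ho.neg_pow t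
        nlinarith [hk1, hpow, hneg]
    · left
      rw [ht, heq]; push_cast; ring
    · exfalso
      rcases eq_or_lt_of_le (by omega : 1 ≤ k) with h1 | h2
      · have hb : (1:ℝ) + n * (1/n) ≤ (1 + 1/n)^n :=
          one_add_mul_le_pow (by linarith) n
        have hnn : (n:ℝ) * (1/n) = 1 := by field_simp
        have ht' : t = 1 + 1/n := by rw [ht, ← h1]; push_cast; ring
        rw [ht', ← h1] at hk2
        push_cast at hk2
        linarith
      · have hk2' : (2:ℝ) ≤ (k:ℝ) := by exact_mod_cast h2
        have h1t : (1:ℝ) ≤ t := by rw [ht]; linarith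
        have hpow : t^2 ≤ t^n := pow_le_pow_right₀ h1t (by omega)
        nlinarith [hk2, hpow]
  · intro h
    rcases h with h | h
    · subst h
      have h0 : (0:ℝ) ≤ (1/(n:ℝ))^n := by positivity
      have h1 : ((1:ℝ)/n)^n < 1 :=
        pow_lt_one₀ (by positivity) (by rw [div_lt_one hnpos]; linarith) (by omega)
      have hf : ⌊((1:ℝ)/n)^n⌋ = 0 := Int.floor_eq_zero_iff.mpr ⟨h0, h1⟩
      rw [hf]
      norm_num
    · subst h
      have hb0 : (0:ℝ) < ((n:ℝ)-1)/n := by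
        apply div_pos <;> linarith
      have hb1 : ((n:ℝ)-1)/n < 1 := by
        rw [div_lt_one hnpos]; linarith
      have hp0 : (0:ℝ) < (((n:ℝ)-1)/n)^n := by positivity
      have hp1 : (((n:ℝ)-1)/n)^n < 1 := pow_lt_one₀ hb0.le hb1 (by omega)
      have hneg : (-(((n:ℝ)-1)/n))^n = -((((n:ℝ)-1)/n)^n) := ho.neg_pow _
      have hf : ⌊(-(((n:ℝ)-1)/n))^n⌋ = -1 := by
        rw [Int.floor_eq_iff]
        rw [hneg]
        constructor
        · push_cast; linarith
        · push_cast; linarith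
      rw [hf]
      push_cast
      field_simp
      ring
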